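/- The function ḡ(z) = (βu₀-1)/r + (1/r)·θ₁(u₀)(e^{θ₁(u₀)d}-e^{-θ₂(u₀)d})/((θ₁(u₀)+θ₂(u₀))e^{θ₁(u₀)d})·e^{-θ₂(u₀)(z-d)} satisfies -r ḡ(z) - (μ-u₀) ḡ'(z) + (σ²/2) ḡ''(z) + βu₀ = 1 for all z > d, is convex, bounded, and ḡ(z) → (βu₀-1)/r as z → ∞. -/

import Mathlib

open Real Set

noncomputable def th1 (μ σ r u : ℝ) : ℝ := (Real.sqrt ((μ - u)^2 + 2*r*σ^2) + (μ - u)) / σ^2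
noncomputable def th2 (μ σ r u : ℝ) : ℝ := (Real.sqrt ((μ - u)^2 + 2*r*σ^2) - (μ - u)) / σ^2

noncomputable def gbar (μ σ r d u₀ β z : ℝ) : ℝ :=
  (β * u₀ - 1) / r + (1/r) * (th1 μ σ r u₀ * (Real.exp (th1 μ σ r u₀ * d) - Real.exp (-(th2 μ σ r u₀) * d)) /
    ((th1 μ σ r u₀ + th2 μ σ r u₀) * Real.exp (th1 μ σ r u₀ * d))) * Real.exp (-(th2 μ σ r u₀) * (z - d))

theorem stmt7 (μ σ r d u₀ β : ℝ) (hσ : 0 < σ) (hr : 0 < r) (hd : 0 < d) (hu₀ : 0 < u₀)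
    (hβ : 0 < β) :
    (∀ z > d,
      -r * gbar μ σ r d u₀ β z - (μ - u₀) * deriv (gbar μ σ r d u₀ β) z
        + σ^2/2 * deriv (deriv (gbar μ σ r d u₀ β)) z + β * u₀ = 1) ∧
    ConvexOn ℝ (Set.Ici d) (gbar μ σ r d u₀ β) ∧
    (∃ M : ℝ, ∀ z ∈ Set.Ici d, |gbar μ σ r d u₀ β z| ≤ M) ∧
    Filter.Tendsto (gbar μ σ r d u₀ β) Filter.atTop (nhds ((β * u₀ - 1) / r)) := by
  have hσ2 : (0:ℝ) < σ^2 := by positivity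
  set m := μ - u₀ with hm
  set a := th1 μ σ r u₀ with ha_def
  set b := th2 μ σ r u₀ with hb_def
  have hD : m^2 < m^2 + 2*r*σ^2 := by nlinarith
  have hs : |m| < Real.sqrt (m^2 + 2*r*σ^2) := by
    rw [← Real.sqrt_sq_eq_abs]
    exact Real.sqrt_lt_sqrt (sq_nonneg m) hD
  have hb : 0 < b := by
    rw [hb_def, th2, ← hm]
    apply div_pos _ hσ2
    have := le_abs_self m
    linarith
  have ha : 0 < a := by
    rw [ha_def, th1, ← hm]
    apply div_pos _ hσ2
    have := neg_abs_le m
    linarith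
  -- quadratic identity for b
  have hsb : σ^2 * b = Real.sqrt (m^2 + 2*r*σ^2) - m := by
    rw [hb_def, th2, ← hm, mul_div_cancel₀ _ (ne_of_gt hσ2)]
  have hsq : (σ^2 * b + m)^2 = m^2 + 2*r*σ^2 := by
    rw [hsb, sub_add_cancel, Real.sq_sqrt (by nlinarith)]
  have hqb : σ^2 * b^2 + 2*m*b - 2*r = 0 := by
    have h : σ^2 * (σ^2 * b^2 + 2*m*b - 2*r) = 0 := by nlinarith [hsq]
    rcases mul_eq_zero.mp h with h' | h'
    · exact absurd h' (ne_of_gt hσ2)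
    · exact h'
  set C := (β * u₀ - 1) / r with hC_def
  set K := (1/r) * (a * (Real.exp (a * d) - Real.exp (-b * d)) / ((a + b) * Real.exp (a * d))) with hK_def
  have hgbar : gbar μ σ r d u₀ β = fun z => C + K * Real.exp (-b * (z - d)) := rfl
  have hK : 0 < K := by
    rw [hK_def]
    apply mul_pos (by positivity)
    apply div_pos (mul_pos ha (sub_pos.mpr (Real.exp_lt_exp.mpr (by nlinarith)))) (by positivity)
  have key : ∀ (c : ℝ) (x : ℝ), HasDerivAt (fun z => c * Real.exp (-b * (z - d)))
      ((c * (-b)) * Real.exp (-b * (x - d))) x := by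
    intro c x
    have h1 : HasDerivAt (fun z : ℝ => -b * (z - d)) (-b) x := by
      simpa using ((hasDerivAt_id x).sub_const d).const_mul (-b)
    have h2 := (h1.exp).const_mul c
    exact h2.congr_deriv (by ring)
  have keyg : ∀ x : ℝ, HasDerivAt (gbar μ σ r d u₀ β)
      ((K * (-b)) * Real.exp (-b * (x - d))) x := by
    intro x
    rw [hgbar]
    exact ((key K x).const_add C)
  have hd1 : deriv (gbar μ σ r d u₀ β) = fun x => (K * (-b)) * Real.exp (-b * (x - d)) :=
    funext fun x => (keyg x).deriv
  have hd2 : deriv (deriv (gbar μ σ r d u₀ β)) = fun x => (K * (-b) * (-b)) * Real.exp (-b * (x - d)) := by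
    rw [hd1]
    exact funext fun x => (key (K * (-b)) x).deriv
  have hC : r * C = β * u₀ - 1 := by
    rw [hC_def]; field_simp
  refine ⟨?_, ?_, ?_, ?_⟩
  · intro z hz
    have e2 : deriv (deriv (gbar μ σ r d u₀ β)) z = K * -b * -b * Real.exp (-b*(z-d)) := by
      rw [hd2]
    have e1 : deriv (gbar μ σ r d u₀ β) z = K * -b * Real.exp (-b*(z-d)) := (keyg z).deriv
    rw [e2, e1, hgbar]
    simp only
    set E := Real.exp (-b * (z - d))
    linear_combination (K * E / 2) * hqb - hC
  · apply convexOn_of_deriv2_nonneg (convex_Ici d)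
    · exact fun x _ => (keyg x).continuousAt.continuousWithinAt
    · exact fun x _ => (keyg x).differentiableAt.differentiableWithinAt
    · rw [hd1]
      exact fun x _ => ((key (K * (-b)) x).differentiableAt).differentiableWithinAt
    · intro x _
      have : deriv^[2] (gbar μ σ r d u₀ β) x = deriv (deriv (gbar μ σ r d u₀ β)) x := by
        simp [Function.iterate_succ, Function.comp]
      rw [this, hd2]
      have hE : (0:ℝ) < Real.exp (-b * (x - d)) := Real.exp_pos _
      show (0:ℝ) ≤ K * -b * -b * Real.exp (-b * (x - d))
      nlinarith [mul_pos (mul_pos hK (mul_pos hb hb)) hE]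
  · refine ⟨|C| + K, fun z hz => ?_⟩
    rw [hgbar]
    have hE0 : 0 < Real.exp (-b * (z - d)) := Real.exp_pos _
    have hE1 : Real.exp (-b * (z - d)) ≤ 1 := by
      rw [← Real.exp_zero]
      apply Real.exp_le_exp.mpr
      have : d ≤ z := hz
      nlinarith
    calc |C + K * Real.exp (-b * (z - d))| ≤ |C| + |K * Real.exp (-b * (z - d))| := abs_add_le _ _
      _ ≤ |C| + K := by
          rw [abs_of_pos (mul_pos hK hE0)]
          nlinarith
  · rw [hgbar]
    have h1 : Filter.Tendsto (fun z : ℝ => -b * (z - d)) Filter.atTop Filter.atBot := by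
      apply Filter.Tendsto.const_mul_atTop_of_neg (neg_neg_iff_pos.mpr hb)
      exact Filter.tendsto_atTop_add_const_right _ (-d) Filter.tendsto_id
    have h2 : Filter.Tendsto (fun z : ℝ => K * Real.exp (-b * (z - d))) Filter.atTop (nhds 0) := by
      have := (Real.tendsto_exp_atBot.comp h1).const_mul K
      simpa using this
    have := h2.const_add C
    simpa using this
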